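/- Let Φ, Ψ : [0,1] → [0,∞) be continuously differentiable with Φ'(t) ≤ −κT·Φ(t) and Ψ'(t) ≥ κT·Ψ(t) for constants κ, T > 0. Set a = (T/2)·∫_{1/2}^{1} Ψ(t) dt and b = (T/2)·∫_{0}^{1/2} Φ(t) dt. Then (1/2)·√(Φ(1/2)·Ψ(1/2)) ≤ (κ/(exp(κT/2) − 1))·√(a·b). -/

import Mathlib

open Real Set


lemma gronwall_lower_left (f f' : ℝ → ℝ) (c a b : ℝ) (hab : a ≤ b)
    (hf : ∀ t ∈ Icc a b, HasDerivAt f (f' t) t)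
    (h : ∀ t ∈ Icc a b, f' t ≤ -c * f t) :
    ∀ t ∈ Icc a b, f b * exp (c * (b - t)) ≤ f t := by
  set g : ℝ → ℝ := fun t => f t * exp (c * t) with hg
  have hgd : ∀ t ∈ Icc a b, HasDerivAt g ((f' t + c * f t) * exp (c * t)) t := by
    intro t ht
    have h1 := (hf t ht).mul ((Real.hasDerivAt_exp (c * t)).comp t
      ((hasDerivAt_id t).const_mul c))
    simp only [Function.comp] at h1
    exact h1.congr_deriv (by ring)
  have hanti : AntitoneOn g (Icc a b) := by
    apply antitoneOn_of_deriv_nonpos (convex_Icc a b)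
    · exact fun t ht => (hgd t ht).continuousAt.continuousWithinAt
    · intro t ht
      rw [interior_Icc] at ht
      exact ((hgd t (Ioo_subset_Icc_self ht)).differentiableAt).differentiableWithinAt
    · intro t ht
      rw [interior_Icc] at ht
      have ht' := Ioo_subset_Icc_self ht
      rw [(hgd t ht').deriv]
      have := h t ht'
      have hle : f' t + c * f t ≤ 0 := by linarith
      exact mul_nonpos_of_nonpos_of_nonneg hle (exp_pos _).le
  intro t ht
  have := hanti ht (right_mem_Icc.mpr hab) ht.2
  simp only [hg] at this
  have hkey : f b * exp (c * b) * exp (-(c * t)) ≤ f t * exp (c * t) * exp (-(c * t)) :=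
    mul_le_mul_of_nonneg_right this (exp_pos _).le
  calc f b * exp (c * (b - t)) = f b * exp (c * b) * exp (-(c * t)) := by
        rw [mul_assoc, ← Real.exp_add]; ring_nf
    _ ≤ f t * exp (c * t) * exp (-(c * t)) := hkey
    _ = f t := by rw [mul_assoc, ← Real.exp_add]; simp

lemma gronwall_lower_right (f f' : ℝ → ℝ) (c a b : ℝ) (hab : a ≤ b)
    (hf : ∀ t ∈ Icc a b, HasDerivAt f (f' t) t)
    (h : ∀ t ∈ Icc a b, c * f t ≤ f' t) :
    ∀ t ∈ Icc a b, f a * exp (c * (t - a)) ≤ f t := by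
  have := gronwall_lower_left (fun s => f (-s)) (fun s => -f' (-s)) c (-b) (-a)
    (by linarith)
    (fun t ht => by
      have : -t ∈ Icc a b := ⟨by linarith [ht.2], by linarith [ht.1]⟩
      simpa [Function.comp_def] using ((hf _ this).comp t (hasDerivAt_neg t)))
    (fun t ht => by
      have ht' : -t ∈ Icc a b := ⟨by linarith [ht.2], by linarith [ht.1]⟩
      have := h _ ht'
      simp only [neg_mul]
      linarith)
  intro t ht
  have := this (-t) ⟨by linarith [ht.2], by linarith [ht.1]⟩
  simpa [show -a - -t = t - a by ring] using this

lemma integral_exp_linear (c u : ℝ) (hc : c ≠ 0) :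
    ∫ t in (0:ℝ)..u, exp (c * t) = (exp (c * u) - 1) / c := by
  have hd : ∀ t ∈ uIcc (0:ℝ) u,
      HasDerivAt (fun s => exp (c * s) / c) (exp (c * t)) t := by
    intro t _
    have h1 := ((Real.hasDerivAt_exp (c * t)).comp t
      ((hasDerivAt_id t).const_mul c)).div_const c
    simp only [Function.comp] at h1
    exact h1.congr_deriv (by field_simp)
  rw [intervalIntegral.integral_eq_sub_of_hasDerivAt hd
    ((continuous_exp.comp (continuous_const.mul continuous_id)).intervalIntegrable 0 u)]
  rw [mul_zero, exp_zero, sub_div]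


/-- Quantitative core of the energy-transport inequality (Lemma 3.8): if `Φ, Ψ ≥ 0` are C¹
on `[0,1]` with `Φ' ≤ -κT·Φ` and `Ψ' ≥ κT·Ψ`, then with `a = (T/2)∫_{1/2}^1 Ψ` and
`b = (T/2)∫_0^{1/2} Φ`, one has `(1/2)√(Φ(1/2)Ψ(1/2)) ≤ (κ/(e^{κT/2}−1))·√(ab)`. -/
theorem energy_transport_core (Φ Ψ Φ' Ψ' : ℝ → ℝ) (κ T : ℝ) (hκ : 0 < κ) (hT : 0 < T)
    (hΦpos : ∀ t ∈ Icc (0:ℝ) 1, 0 ≤ Φ t) (hΨpos : ∀ t ∈ Icc (0:ℝ) 1, 0 ≤ Ψ t)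
    (hΦderiv : ∀ t ∈ Icc (0:ℝ) 1, HasDerivAt Φ (Φ' t) t)
    (hΨderiv : ∀ t ∈ Icc (0:ℝ) 1, HasDerivAt Ψ (Ψ' t) t)
    (hΦ'cont : ContinuousOn Φ' (Icc 0 1)) (hΨ'cont : ContinuousOn Ψ' (Icc 0 1))
    (hΦ' : ∀ t ∈ Icc (0:ℝ) 1, Φ' t ≤ -(κ * T) * Φ t)
    (hΨ' : ∀ t ∈ Icc (0:ℝ) 1, Ψ' t ≥ κ * T * Ψ t) :
    (1 / 2) * Real.sqrt (Φ (1/2) * Ψ (1/2)) ≤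
      κ / (exp (κ * T / 2) - 1) *
        Real.sqrt ((T / 2 * ∫ t in (1/2 : ℝ)..1, Ψ t) *
          (T / 2 * ∫ t in (0 : ℝ)..(1/2 : ℝ), Φ t)) := by
  set c := κ * T with hc
  have hcpos : 0 < c := mul_pos hκ hT
  set E := exp (κ * T / 2) - 1 with hE
  have hEpos : 0 < E := by
    have : (1:ℝ) < exp (κ * T / 2) := by
      rw [← Real.exp_zero]
      exact Real.exp_lt_exp.mpr (by positivity)
    simpa [hE] using sub_pos.mpr this
  have hsub1 : Icc (0:ℝ) (1/2) ⊆ Icc 0 1 := Icc_subset_Icc le_rfl (by norm_num)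
  have hsub2 : Icc (1/2:ℝ) 1 ⊆ Icc 0 1 := Icc_subset_Icc (by norm_num) le_rfl
  have hhalf : (1/2 : ℝ) ∈ Icc (0:ℝ) 1 := by norm_num
  -- Grönwall lower bounds
  have hΦlb := gronwall_lower_left Φ Φ' c 0 (1/2) (by norm_num)
    (fun t ht => hΦderiv t (hsub1 ht)) (fun t ht => hΦ' t (hsub1 ht))
  have hΨlb := gronwall_lower_right Ψ Ψ' c (1/2) 1 (by norm_num)
    (fun t ht => hΨderiv t (hsub2 ht)) (fun t ht => hΨ' t (hsub2 ht))
  -- continuity / integrability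
  have hΦcont : ContinuousOn Φ (Icc 0 1) :=
    fun t ht => (hΦderiv t ht).continuousAt.continuousWithinAt
  have hΨcont : ContinuousOn Ψ (Icc 0 1) :=
    fun t ht => (hΨderiv t ht).continuousAt.continuousWithinAt
  have hΦint : IntervalIntegrable Φ MeasureTheory.volume 0 (1/2) :=
    ContinuousOn.intervalIntegrable
      (by rw [uIcc_of_le (by norm_num : (0:ℝ) ≤ 1/2)]; exact hΦcont.mono hsub1)
  have hΨint : IntervalIntegrable Ψ MeasureTheory.volume (1/2) 1 :=
    ContinuousOn.intervalIntegrable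
      (by rw [uIcc_of_le (by norm_num : (1/2:ℝ) ≤ 1)]; exact hΨcont.mono hsub2)
  -- exponential integrals
  have I1 : ∫ t in (0:ℝ)..(1/2), exp (c * (1/2 - t)) = (exp (c/2) - 1) / c := by
    rw [intervalIntegral.integral_comp_sub_left (fun t => exp (c * t)) (1/2)]
    rw [show (1:ℝ)/2 - 1/2 = 0 by norm_num, show (1:ℝ)/2 - 0 = 1/2 by norm_num,
      integral_exp_linear c (1/2) hcpos.ne', show c * (1/2) = c/2 by ring]
  have I2 : ∫ t in (1/2:ℝ)..1, exp (c * (t - 1/2)) = (exp (c/2) - 1) / c := by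
    rw [intervalIntegral.integral_comp_sub_right (fun t => exp (c * t)) (1/2)]
    rw [show (1:ℝ)/2 - 1/2 = 0 by norm_num, show (1:ℝ) - 1/2 = 1/2 by norm_num,
      integral_exp_linear c (1/2) hcpos.ne', show c * (1/2) = c/2 by ring]
  -- integral lower bounds
  have hB : Φ (1/2) * ((exp (c/2) - 1) / c) ≤ ∫ t in (0:ℝ)..(1/2), Φ t := by
    have hmono : (∫ t in (0:ℝ)..(1/2), Φ (1/2) * exp (c * (1/2 - t))) ≤
        ∫ t in (0:ℝ)..(1/2), Φ t := by
      apply intervalIntegral.integral_mono_on (by norm_num)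
      · exact ((continuous_const.mul ((continuous_exp.comp
          (continuous_const.mul (continuous_const.sub continuous_id))))).intervalIntegrable _ _)
      · exact hΦint
      · exact fun t ht => hΦlb t ht
    rwa [intervalIntegral.integral_const_mul, I1] at hmono
  have hA : Ψ (1/2) * ((exp (c/2) - 1) / c) ≤ ∫ t in (1/2:ℝ)..1, Ψ t := by
    have hmono : (∫ t in (1/2:ℝ)..1, Ψ (1/2) * exp (c * (t - 1/2))) ≤
        ∫ t in (1/2:ℝ)..1, Ψ t := by
      apply intervalIntegral.integral_mono_on (by norm_num)
      · exact ((continuous_const.mul ((continuous_exp.comp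
          (continuous_const.mul (continuous_id.sub continuous_const))))).intervalIntegrable _ _)
      · exact hΨint
      · exact fun t ht => hΨlb t ht
    rwa [intervalIntegral.integral_const_mul, I2] at hmono
  -- rewrite exp(c/2) - 1 as E
  have hEc : exp (c/2) - 1 = E := by rw [hE, hc]
  set A := ∫ t in (1/2:ℝ)..1, Ψ t with hAdef
  set B := ∫ t in (0:ℝ)..(1/2), Φ t with hBdef
  have hΦh : 0 ≤ Φ (1/2) := hΦpos _ hhalf
  have hΨh : 0 ≤ Ψ (1/2) := hΨpos _ hhalf
  have hK : 0 ≤ E / (2 * κ) := by positivity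
  have ha' : Ψ (1/2) * (E / (2 * κ)) ≤ T / 2 * A := by
    have h1 : T / 2 * (Ψ (1/2) * ((exp (c/2) - 1) / c)) ≤ T / 2 * A :=
      mul_le_mul_of_nonneg_left hA (by positivity)
    have h2 : T / 2 * (Ψ (1/2) * ((exp (c/2) - 1) / c)) = Ψ (1/2) * (E / (2 * κ)) := by
      rw [hEc, hc]; field_simp
    linarith
  have hb' : Φ (1/2) * (E / (2 * κ)) ≤ T / 2 * B := by
    have h1 : T / 2 * (Φ (1/2) * ((exp (c/2) - 1) / c)) ≤ T / 2 * B :=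
      mul_le_mul_of_nonneg_left hB (by positivity)
    have h2 : T / 2 * (Φ (1/2) * ((exp (c/2) - 1) / c)) = Φ (1/2) * (E / (2 * κ)) := by
      rw [hEc, hc]; field_simp
    linarith
  have hab : (Φ (1/2) * Ψ (1/2)) * (E / (2 * κ))^2 ≤ (T / 2 * A) * (T / 2 * B) := by
    have := mul_le_mul ha' hb' (by positivity) (le_trans (by positivity) ha')
    calc (Φ (1/2) * Ψ (1/2)) * (E / (2 * κ))^2
        = (Ψ (1/2) * (E / (2 * κ))) * (Φ (1/2) * (E / (2 * κ))) := by ring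
      _ ≤ (T / 2 * A) * (T / 2 * B) := this
  have hsq : Real.sqrt (Φ (1/2) * Ψ (1/2)) * (E / (2 * κ)) ≤
      Real.sqrt ((T / 2 * A) * (T / 2 * B)) := by
    rw [← Real.sqrt_sq hK, ← Real.sqrt_mul (by positivity)]
    exact Real.sqrt_le_sqrt hab
  have hfin : (1/2 : ℝ) * Real.sqrt (Φ (1/2) * Ψ (1/2)) =
      κ / E * (Real.sqrt (Φ (1/2) * Ψ (1/2)) * (E / (2 * κ))) := by
    field_simp
  rw [hfin]
  exact mul_le_mul_of_nonneg_left hsq (by positivity)
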